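/- Let δ_M = min over monitors m ∈ M of δ(G_m). If min(δ_M, δ(G*) − 1) ≤ σ − 2, then the maximum identifiability of G under CSP satisfies min(δ_M − 1, δ(G*) − 2) ≤ Ω_CSP(G) ≤ min(δ_M, δ(G*) − 1). -/

import Mathlib

open SimpleGraph

section WalkHelpers
variable {W : Type*} {H : SimpleGraph W}

lemma isPath_append {a b c : W} {p : H.Walk a b} {q : H.Walk b c}
    (hp : p.IsPath) (hq : q.IsPath)
    (hint : ∀ x ∈ p.support, x ∈ q.support → x = b) : (p.append q).IsPath := by
  rw [Walk.isPath_def, Walk.support_append]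
  refine List.Nodup.append (Walk.isPath_def _ |>.1 hp) ?_ ?_
  · exact (Walk.isPath_def _ |>.1 hq).tail
  · intro x hxp hxq
    have hxq' : x ∈ q.support := List.mem_of_mem_tail hxq
    have hxb : x = b := hint x hxp hxq'
    subst hxb
    have := Walk.isPath_def _ |>.1 hq
    rw [q.support_eq_cons] at this
    exact (List.nodup_cons.1 this).1 hxq

/-- first vertex of a walk lying in `T`. -/
lemma exists_firstHit {a b : W} (w : H.Walk a b) (T : Set W) (hb : b ∈ T) :
    ∃ (x : W) (_ : x ∈ T) (wx : H.Walk a x),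
      (∀ y ∈ wx.support, y ∈ T → y = x) ∧ (∀ y ∈ wx.support, y ∈ w.support) ∧
      (w.IsPath → wx.IsPath) := by
  induction w with
  | nil => exact ⟨_, hb, Walk.nil, by simp, fun y hy => hy, fun _ => Walk.IsPath.nil⟩
  | @cons a y b h w' ih =>
    by_cases ha : a ∈ T
    · exact ⟨a, ha, Walk.nil, by simp, by simp, fun _ => Walk.IsPath.nil⟩
    · obtain ⟨x, hxT, wx, hfirst, hsub, hpath⟩ := ih hb
      refine ⟨x, hxT, Walk.cons h wx, ?_, ?_, ?_⟩
      · intro y hy hyT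
        rw [Walk.support_cons, List.mem_cons] at hy
        rcases hy with rfl | hy
        · exact absurd hyT ha
        · exact hfirst y hy hyT
      · intro y hy
        rw [Walk.support_cons, List.mem_cons] at hy
        rw [Walk.support_cons, List.mem_cons]
        rcases hy with rfl | hy
        · exact Or.inl rfl
        · exact Or.inr (hsub y hy)
      · intro hP
        rw [Walk.cons_isPath_iff] at hP ⊢
        exact ⟨hpath hP.1, fun hmem => hP.2 (hsub a hmem)⟩

variable [DecidableEq W]

/-- junction lemma: a vertex in both halves of a split path equals the split point. -/
lemma eq_of_mem_takeUntil_mem_dropUntil {a b x y : W} {p : H.Walk a b} (hp : p.IsPath)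
    (hx : x ∈ p.support) (h1 : y ∈ (p.takeUntil x hx).support)
    (h2 : y ∈ (p.dropUntil x hx).support) : y = x := by
  by_contra hne
  have hspec := p.take_spec hx
  have hnodup : p.support.Nodup := Walk.isPath_def _ |>.1 hp
  rw [← hspec, Walk.support_append] at hnodup
  have h2' : y ∈ (p.dropUntil x hx).support.tail := by
    have := (p.dropUntil x hx).support_eq_cons
    rw [this] at h2
    rcases List.mem_cons.1 h2 with rfl | h
    · exact absurd rfl hne
    · exact h
  exact (List.disjoint_of_nodup_append hnodup) h1 h2'

lemma endpoint_mem_takeUntil {a b x : W} {p : H.Walk a b} (hp : p.IsPath)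
    (hx : x ∈ p.support) (hb : b ∈ (p.takeUntil x hx).support) : b = x :=
  eq_of_mem_takeUntil_mem_dropUntil hp hx hb (Walk.end_mem_support _)

end WalkHelpers

section Bridge
variable {W : Type*} {H : SimpleGraph W}

lemma reachable_induce_of_walk {A : Set W} :
    ∀ {a b : W} (w : H.Walk a b) (hw : ∀ x ∈ w.support, x ∈ A),
      (H.induce A).Reachable ⟨a, hw a w.start_mem_support⟩ ⟨b, hw b w.end_mem_support⟩ := by
  intro a b w
  induction w with
  | nil => intro hw; rfl
  | @cons a y b h w' ih =>
    intro hw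
    have hy : y ∈ A := hw y (by simp)
    have hadj : (H.induce A).Adj ⟨a, hw a (Walk.start_mem_support _)⟩ ⟨y, hy⟩ := by
      simp only [comap_adj, Function.Embedding.coe_subtype]
      exact h
    refine hadj.reachable.trans ?_
    have := ih (fun x hx => hw x (by rw [Walk.support_cons]; exact List.mem_cons_of_mem _ hx))
    exact this

lemma walk_of_induce_reachable {A : Set W} {x y : ↥A}
    (h : (H.induce A).Reachable x y) :
    ∃ w : H.Walk ↑x ↑y, ∀ z ∈ w.support, z ∈ A := by
  obtain ⟨p⟩ := h
  induction p with
  | nil => exact ⟨Walk.nil, by simp [Subtype.coe_prop]⟩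
  | @cons a c b h p' ih =>
    obtain ⟨w', hw'⟩ := ih
    have hadj : H.Adj ↑a ↑c := by
      simpa only [comap_adj, Function.Embedding.coe_subtype] using h
    refine ⟨Walk.cons hadj w', ?_⟩
    intro z hz
    rw [Walk.support_cons, List.mem_cons] at hz
    rcases hz with rfl | hz
    · exact a.2
    · exact hw' z hz

/-- From connectivity of the induced graph on `Sᶜ`, get an avoiding walk. -/
lemma walk_avoiding_of_connected {S : Set W} (hc : (H.induce Sᶜ).Connected)
    {a b : W} (ha : a ∉ S) (hb : b ∉ S) :
    ∃ w : H.Walk a b, ∀ x ∈ w.support, x ∉ S := by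
  have := hc.preconnected ⟨a, ha⟩ ⟨b, hb⟩
  obtain ⟨w, hw⟩ := walk_of_induce_reachable this
  exact ⟨w, hw⟩

lemma connected_of_walks {S : Set W} (hne : Sᶜ.Nonempty)
    (h : ∀ a ∈ Sᶜ, ∀ b ∈ Sᶜ, ∃ w : H.Walk a b, ∀ x ∈ w.support, x ∉ S) :
    (H.induce Sᶜ).Connected := by
  haveI : Nonempty ↥(Sᶜ) := hne.to_subtype
  refine ⟨fun x y => ?_⟩
  obtain ⟨w, hw⟩ := h ↑x x.2 ↑y y.2
  have := reachable_induce_of_walk (A := Sᶜ) w hw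
  simpa using this

end Bridge

/-- A measurement path in `G`: a walk together with its two endpoints. -/
abbrev MWalk {V : Type*} (G : SimpleGraph V) := Σ u : V, Σ v : V, G.Walk u v

/-- A measurement path traverses a node `x` iff `x` lies on the walk. -/
def Traverses {V : Type*} {G : SimpleGraph V} (p : MWalk G) (x : V) : Prop :=
  x ∈ p.2.2.support

/-- Two failure sets `F`, `F'` are distinguishable w.r.t. the collection `P` of
measurement paths: some path of `P` traverses a node of one set but no node of
the other. -/
def Distinguishable {V : Type*} {G : SimpleGraph V} (P : Set (MWalk G))
    (F F' : Set V) : Prop :=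
  (∃ p ∈ P, (∃ x ∈ F, Traverses p x) ∧ ∀ x ∈ F', ¬ Traverses p x) ∨
  (∃ p ∈ P, (∃ x ∈ F', Traverses p x) ∧ ∀ x ∈ F, ¬ Traverses p x)

/-- `k`-identifiability w.r.t. paths `P`, where failure sets range over subsets
of the non-monitor set `Nm`. -/
def Identifiable {V : Type*} {G : SimpleGraph V} (P : Set (MWalk G))
    (Nm : Set V) (k : ℕ) : Prop :=
  ∀ F F' : Set V, F ⊆ Nm → F' ⊆ Nm → F.ncard ≤ k → F'.ncard ≤ k → F ≠ F' →
    Distinguishable P F F'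

/-- CAP measurement paths: all walks whose two endpoints are monitors
(endpoints may coincide, nodes may be revisited). -/
def CAP {V : Type*} (G : SimpleGraph V) (M : Set V) : Set (MWalk G) :=
  { p | p.1 ∈ M ∧ p.2.1 ∈ M }

/-- CSP measurement paths: all simple (cycle-free) paths whose two endpoints
are distinct monitors. -/
def CSP {V : Type*} (G : SimpleGraph V) (M : Set V) : Set (MWalk G) :=
  { p | p.1 ∈ M ∧ p.2.1 ∈ M ∧ p.1 ≠ p.2.1 ∧ p.2.2.IsPath }

/-- Every connected component of `G − V'` contains at least one monitor. -/
def ComponentsHaveMonitor {V : Type*} (G : SimpleGraph V) (M : Set V)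
    (V' : Set V) : Prop :=
  ∀ v : ↥(V'ᶜ), ∃ m : ↥(V'ᶜ), (m : V) ∈ M ∧ (G.induce V'ᶜ).Reachable v m

/-- The auxiliary graph on the non-monitors `Nm` plus a new virtual monitor
`m'` (the vertex `none`), where the monitors in `M'` are used to create the
virtual links: edges of `G` between non-monitors are kept; `m'` is joined to
each non-monitor adjacent in `G` to some monitor in `M'`; and two non-monitors
each adjacent in `G` to some monitor in `M'` are joined.
`G* = StarGraph G Mᶜ M` and `G_m = StarGraph G Mᶜ (M \ {m})`. -/
def StarGraph {V : Type*} (G : SimpleGraph V) (Nm M' : Set V) :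
    SimpleGraph (Option ↥Nm) where
  Adj x y :=
    match x, y with
    | none, none => False
    | none, some u => ∃ m ∈ M', G.Adj (u : V) m
    | some u, none => ∃ m ∈ M', G.Adj (u : V) m
    | some u, some w => (u : V) ≠ (w : V) ∧
        (G.Adj (u : V) (w : V) ∨
          ((∃ m ∈ M', G.Adj (u : V) m) ∧ ∃ m ∈ M', G.Adj (w : V) m))
  symm := by
    constructor
    rintro (_ | u) (_ | w) h
    · exact h
    · exact h
    · exact h
    · exact ⟨fun e => h.1 e.symm, h.2.imp (fun hh => hh.symm) fun hh => ⟨hh.2, hh.1⟩⟩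
  loopless := by
    constructor
    rintro (_ | u) h
    · exact h
    · exact h.1 rfl

/-- A graph `H` is `k`-vertex-connected: it has more than `k` vertices and
removing fewer than `k` vertices leaves it connected. -/
def KConnected {W : Type*} (H : SimpleGraph W) (k : ℕ) : Prop :=
  k < Nat.card W ∧ ∀ S : Set W, S.ncard < k → (H.induce Sᶜ).Connected

/-- The vertex connectivity `δ(H)`: the largest `k` such that `H` is
`k`-vertex-connected. -/
noncomputable def vertexConnectivity {W : Type*} (H : SimpleGraph W) : ℕ :=
  sSup { k | KConnected H k }

/-- The maximum identifiability: the largest `k ∈ {0, …, |Nm|}` such that the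
network is `k`-identifiable w.r.t. `P`. -/
noncomputable def maxIdent {V : Type*} {G : SimpleGraph V} (P : Set (MWalk G))
    (Nm : Set V) : ℕ :=
  sSup { k | k ≤ Nm.ncard ∧ Identifiable P Nm k }

/-- `MSC(v)`: the minimum cardinality of a set `V' ⊆ Nm \ {v}` of non-monitors
such that every path of `P` traversing `v` traverses some node of `V'`
(`⊤ = ∞` if no such set exists). -/
noncomputable def MSC {V : Type*} {G : SimpleGraph V} (P : Set (MWalk G))
    (Nm : Set V) (v : V) : ℕ∞ :=
  sInf { n : ℕ∞ | ∃ V' : Set V, V' ⊆ Nm \ {v} ∧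
    (∀ p ∈ P, Traverses p v → ∃ x ∈ V', Traverses p x) ∧ n = (V'.ncard : ℕ∞) }


section KC
variable {W : Type*} [Finite W] (H : SimpleGraph W)

lemma kconn_mono {j k : ℕ} (h : KConnected H k) (hj : j ≤ k) : KConnected H j :=
  ⟨lt_of_le_of_lt hj h.1, fun S hS => h.2 S (lt_of_lt_of_le hS hj)⟩

lemma kconn_bddAbove : BddAbove { k | KConnected H k } :=
  ⟨Nat.card W, fun k hk => le_of_lt hk.1⟩

lemma kconn_vc (hpos : 0 < Nat.card W) : KConnected H (vertexConnectivity H) := by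
  have hne : { k | KConnected H k }.Nonempty := by
    refine ⟨0, hpos, fun S hS => absurd hS (by simp)⟩
  exact Nat.sSup_mem hne (kconn_bddAbove H)

lemma not_kconn_succ : ¬ KConnected H (vertexConnectivity H + 1) := by
  intro h
  have h2 := le_csSup (kconn_bddAbove H) h
  simp only [vertexConnectivity] at h2
  omega

lemma exists_cut (hcard : vertexConnectivity H + 1 < Nat.card W) :
    ∃ S : Set W, S.ncard ≤ vertexConnectivity H ∧ ¬ (H.induce Sᶜ).Connected := by
  have h := not_kconn_succ H
  rw [KConnected] at h
  push_neg at h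
  obtain ⟨S, hS1, hS2⟩ := h hcard
  exact ⟨S, by omega, hS2⟩

lemma cut_ncard_ge {S : Set W} (hS : ¬ (H.induce Sᶜ).Connected) :
    vertexConnectivity H ≤ S.ncard := by
  by_contra hlt
  push_neg at hlt
  rcases Nat.eq_zero_or_pos (Nat.card W) with h0 | hpos
  · have hempty : {k | KConnected H k} = ∅ := by
      ext k; simp [KConnected, h0]
    have : vertexConnectivity H = 0 := by
      simp only [vertexConnectivity, hempty, csSup_empty]; rfl
    omega
  · exact hS ((kconn_vc H hpos).2 S hlt)

end KC

section TwoPaths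
variable {W : Type*} [DecidableEq W] {H : SimpleGraph W} {S : Set W}

private lemma concat_isPath {u w₀ v : W} {Q : H.Walk u w₀} (hQ : Q.IsPath)
    (hadj : H.Adj w₀ v) (hvQ : v ∉ Q.support) :
    (Q.append (Walk.cons hadj Walk.nil)).IsPath := by
  refine isPath_append hQ ?_ ?_
  · simp [hadj.ne]
  · intro x hx hx'
    simp only [Walk.support_cons, Walk.support_nil, List.mem_cons,
      List.not_mem_nil, or_false] at hx'
    rcases hx' with rfl | rfl
    · rfl
    · exact absurd hx hvQ

private lemma mem_concat_support {u w₀ v y : W} {Q : H.Walk u w₀} (hadj : H.Adj w₀ v)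
    (hy : y ∈ (Q.append (Walk.cons hadj Walk.nil)).support) :
    y ∈ Q.support ∨ y = v := by
  rw [Walk.support_append] at hy
  rcases List.mem_append.1 hy with h | h
  · exact Or.inl h
  · simp only [Walk.support_cons, Walk.support_nil, List.tail_cons, List.mem_cons,
      List.not_mem_nil, or_false] at h
    exact Or.inr h

private lemma tp_case_mem {u w₀ v : W} (P Q : H.Walk u w₀) (hP : P.IsPath) (hQ : Q.IsPath)
    (hPS : ∀ y ∈ P.support, y ∉ S) (hQS : ∀ y ∈ Q.support, y ∉ S)
    (hinter : ∀ y ∈ P.support, y ∈ Q.support → y = u ∨ y = w₀)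
    (hadj : H.Adj w₀ v) (hvS : v ∉ S) (hvu : v ≠ u) (hvw : v ≠ w₀)
    (hvP : v ∈ P.support) :
    ∃ p q : H.Walk u v, p.IsPath ∧ q.IsPath ∧ (∀ y ∈ p.support, y ∉ S) ∧
      (∀ y ∈ q.support, y ∉ S) ∧ (∀ y ∈ p.support, y ∈ q.support → y = u ∨ y = v) := by
  have hvQ : v ∉ Q.support := fun hvQ => by
    rcases hinter v hvP hvQ with h | h
    · exact hvu h
    · exact hvw h
  refine ⟨P.takeUntil v hvP, Q.append (Walk.cons hadj Walk.nil),
    hP.takeUntil hvP, concat_isPath hQ hadj hvQ,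
    fun y hy => hPS y (Walk.support_takeUntil_subset _ _ hy), ?_, ?_⟩
  · intro y hy
    rcases mem_concat_support hadj hy with h | rfl
    · exact hQS y h
    · exact hvS
  · intro y hyp hyq
    rcases mem_concat_support hadj hyq with h | rfl
    · rcases hinter y (Walk.support_takeUntil_subset _ _ hyp) h with rfl | rfl
      · exact Or.inl rfl
      · exact absurd (endpoint_mem_takeUntil hP hvP hyp) (Ne.symm hvw)
    · exact Or.inr rfl

private lemma tp_case_r {u w₀ v x : W} (P Q : H.Walk u w₀) (hP : P.IsPath) (hQ : Q.IsPath)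
    (hPS : ∀ y ∈ P.support, y ∉ S) (hQS : ∀ y ∈ Q.support, y ∉ S)
    (hinter : ∀ y ∈ P.support, y ∈ Q.support → y = u ∨ y = w₀)
    (hadj : H.Adj w₀ v) (hvS : v ∉ S) (hvu : v ≠ u) (hvw : v ≠ w₀)
    (hvQ : v ∉ Q.support)
    (hx : x ∈ P.support) (ρ : H.Walk v x) (hρ : ρ.IsPath)
    (hρS : ∀ y ∈ ρ.support, y ∉ S ∧ y ≠ w₀)
    (hfirst : ∀ y ∈ ρ.support, (y ∈ P.support ∨ y ∈ Q.support) → y = x) :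
    ∃ p q : H.Walk u v, p.IsPath ∧ q.IsPath ∧ (∀ y ∈ p.support, y ∉ S) ∧
      (∀ y ∈ q.support, y ∉ S) ∧ (∀ y ∈ p.support, y ∈ q.support → y = u ∨ y = v) := by
  have hxw : x ≠ w₀ := (hρS x ρ.end_mem_support).2
  have hxu_or : x ∈ Q.support → x = u := fun hxQ => by
    rcases hinter x hx hxQ with h | h
    · exact h
    · exact absurd h hxw
  refine ⟨(P.takeUntil x hx).append ρ.reverse, Q.append (Walk.cons hadj Walk.nil),
    ?_, concat_isPath hQ hadj hvQ, ?_, ?_, ?_⟩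
  · refine isPath_append (hP.takeUntil hx) hρ.reverse ?_
    intro y hy hy'
    rw [Walk.support_reverse, List.mem_reverse] at hy'
    exact hfirst y hy' (Or.inl (Walk.support_takeUntil_subset _ _ hy))
  · intro y hy
    rw [Walk.support_append] at hy
    rcases List.mem_append.1 hy with h | h
    · exact hPS y (Walk.support_takeUntil_subset _ _ h)
    · have : y ∈ ρ.support := by
        have := List.mem_of_mem_tail h
        rwa [Walk.support_reverse, List.mem_reverse] at this
      exact (hρS y this).1
  · intro y hy
    rcases mem_concat_support hadj hy with h | rfl
    · exact hQS y h
    · exact hvS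
  · -- y in pB and in pA
    intro y hyB hyA
    rcases mem_concat_support hadj hyA with hyQ | rfl
    swap
    · exact Or.inr rfl
    rw [Walk.support_append] at hyB
    rcases List.mem_append.1 hyB with h | h
    · rcases hinter y (Walk.support_takeUntil_subset _ _ h) hyQ with rfl | rfl
      · exact Or.inl rfl
      · exact absurd (endpoint_mem_takeUntil hP hx h) (Ne.symm hxw)
    · have hyρ : y ∈ ρ.support := by
        have := List.mem_of_mem_tail h
        rwa [Walk.support_reverse, List.mem_reverse] at this
      have : y = x := hfirst y hyρ (Or.inr hyQ)
      subst this
      exact Or.inl (hxu_or hyQ)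

end TwoPaths

section TwoPathsMain
variable {W : Type*} [DecidableEq W] {H : SimpleGraph W} {S : Set W}

lemma two_paths
    (HC : ∀ x a b : W, a ∉ S → a ≠ x → b ∉ S → b ≠ x →
      ∃ w : H.Walk a b, ∀ y ∈ w.support, y ∉ S ∧ y ≠ x) :
    ∀ (n : ℕ) (u v : W), u ∉ S → v ∉ S → u ≠ v →
    (∃ w : H.Walk u v, (∀ y ∈ w.support, y ∉ S) ∧ w.length ≤ n) →
    ∃ p q : H.Walk u v, p.IsPath ∧ q.IsPath ∧ (∀ y ∈ p.support, y ∉ S) ∧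
      (∀ y ∈ q.support, y ∉ S) ∧ (∀ y ∈ p.support, y ∈ q.support → y = u ∨ y = v) := by
  intro n
  induction n using Nat.strong_induction_on with
  | _ n ih =>
  intro u v hu hv huv hex
  obtain ⟨w, hwS, hwlen⟩ := hex
  by_cases hshort : ∃ m, m < n ∧ ∃ w' : H.Walk u v, (∀ y ∈ w'.support, y ∉ S) ∧ w'.length ≤ m
  · obtain ⟨m, hm, hw'⟩ := hshort
    exact ih m hm u v hu hv huv hw'
  have hmin : ∀ w' : H.Walk u v, (∀ y ∈ w'.support, y ∉ S) → n ≤ w'.length := by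
    intro w' hw'
    by_contra hlen
    push_neg at hlen
    exact hshort ⟨w'.length, hlen, w', hw', le_refl _⟩
  match n, ih, hwlen, hmin with
  | 0, ih, hwlen, hmin =>
    cases w with
    | nil => exact absurd rfl huv
    | cons h t => simp [Walk.length_cons] at hwlen
  | (n' + 1), ih, hwlen, hmin =>
  obtain ⟨ω, hωpath, hωS, hωlen⟩ :
      ∃ ω : H.Walk u v, ω.IsPath ∧ (∀ y ∈ ω.support, y ∉ S) ∧ ω.length = n' + 1 := by
    have hbS : ∀ y ∈ w.bypass.support, y ∉ S :=
      fun y hy => hwS y (Walk.support_bypass_subset w hy)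
    have h2 := hmin w.bypass hbS
    have h1 := le_trans (Walk.length_bypass_le w) hwlen
    exact ⟨w.bypass, Walk.bypass_isPath w, hbS, by omega⟩
  match n', ih, hωlen with
  | 0, ih, hωlen =>
    cases ω with
    | nil => simp at hωlen
    | cons h t =>
      cases t with
      | nil =>
        refine ⟨Walk.cons h Walk.nil, Walk.cons h Walk.nil, hωpath, hωpath, hωS, hωS, ?_⟩
        intro y hy _
        simp only [Walk.support_cons, Walk.support_nil, List.mem_cons,
          List.not_mem_nil, or_false] at hy
        exact hy
      | cons h' t' => simp [Walk.length_cons] at hωlen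
  | (n'' + 1), ih, hωlen =>
  -- peel off the last edge of ω
  cases hrev : ω.reverse with
  | nil =>
    have := Walk.length_reverse ω
    rw [hrev] at this
    simp at this
    omega
  | @cons _ w₀ _ hadj ρ =>
    have hω : ω = ρ.reverse.append (Walk.cons hadj.symm Walk.nil) := by
      have := congrArg Walk.reverse hrev
      rw [Walk.reverse_reverse] at this
      rw [this, Walk.reverse_cons]
    have hsupp : ω.support = ρ.reverse.support ++ [v] := by
      rw [hω, Walk.support_append]
      simp
    have hω₀S : ∀ y ∈ ρ.reverse.support, y ∉ S := by
      intro y hy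
      exact hωS y (by rw [hsupp]; exact List.mem_append_left _ hy)
    have hω₀len : ρ.reverse.length = n'' + 1 := by
      have : ω.length = ρ.reverse.length + 1 := by
        rw [hω, Walk.length_append]
        simp
      omega
    have hw₀S : w₀ ∉ S := hω₀S w₀ ρ.reverse.end_mem_support
    have hw₀u : w₀ ≠ u := by
      intro heq
      subst heq
      have := hmin (Walk.cons hadj.symm Walk.nil) (by
        intro y hy
        simp only [Walk.support_cons, Walk.support_nil, List.mem_cons,
          List.not_mem_nil, or_false] at hy
        rcases hy with rfl | rfl
        · exact hu
        · exact hv)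
      simp [Walk.length_cons] at this
    have hw₀v : w₀ ≠ v := by
      intro heq
      have hrevpath : ω.reverse.IsPath := hωpath.reverse
      rw [hrev, Walk.cons_isPath_iff] at hrevpath
      exact hrevpath.2 (heq ▸ ρ.start_mem_support)
    obtain ⟨P, Q, hP, hQ, hPS, hQS, hinter⟩ :=
      ih (n'' + 1) (by omega) u w₀ hu hw₀S (Ne.symm hw₀u)
        ⟨ρ.reverse, hω₀S, le_of_eq hω₀len⟩
    by_cases hvP : v ∈ P.support
    · exact tp_case_mem P Q hP hQ hPS hQS hinter hadj.symm hv (Ne.symm huv) hw₀v.symm hvP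
    by_cases hvQ : v ∈ Q.support
    · exact tp_case_mem Q P hQ hP hQS hPS (fun y hyQ hyP => hinter y hyP hyQ)
        hadj.symm hv (Ne.symm huv) hw₀v.symm hvQ
    -- main case: use a path from v to u avoiding w₀
    obtain ⟨R0, hR0⟩ := HC w₀ v u hv hw₀v.symm hu hw₀u.symm
    have hRS : ∀ y ∈ R0.bypass.support, y ∉ S ∧ y ≠ w₀ :=
      fun y hy => hR0 y (Walk.support_bypass_subset _ hy)
    obtain ⟨x, hxT, ρx, hfirst, hsub, hpathx⟩ :=
      exists_firstHit R0.bypass {z | z ∈ P.support ∨ z ∈ Q.support}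
        (Or.inl P.start_mem_support)
    have hρxpath : ρx.IsPath := hpathx (Walk.bypass_isPath R0)
    have hρxS : ∀ y ∈ ρx.support, y ∉ S ∧ y ≠ w₀ := fun y hy => hRS y (hsub y hy)
    rcases hxT with hxP | hxQ
    · exact tp_case_r P Q hP hQ hPS hQS hinter hadj.symm hv (Ne.symm huv) hw₀v.symm
        hvQ hxP ρx hρxpath hρxS hfirst
    · exact tp_case_r Q P hQ hP hQS hPS (fun y hyQ hyP => hinter y hyP hyQ)
        hadj.symm hv (Ne.symm huv) hw₀v.symm
        hvP hxQ ρx hρxpath hρxS (fun y hy hmem => hfirst y hy hmem.symm)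

end TwoPathsMain

section Star
variable {V : Type*} {G : SimpleGraph V} {M : Set V}

lemma star_adj_none_some {M' : Set V} {x : ↥(Mᶜ)} :
    (StarGraph G Mᶜ M').Adj none (some x) ↔ ∃ m ∈ M', G.Adj ↑x m := Iff.rfl

lemma star_adj_some_none {M' : Set V} {x : ↥(Mᶜ)} :
    (StarGraph G Mᶜ M').Adj (some x) none ↔ ∃ m ∈ M', G.Adj ↑x m := Iff.rfl

lemma star_adj_some_some {M' : Set V} {x y : ↥(Mᶜ)} :
    (StarGraph G Mᶜ M').Adj (some x) (some y) ↔ (↑x : V) ≠ ↑y ∧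
      (G.Adj ↑x ↑y ∨ ((∃ m ∈ M', G.Adj ↑x m) ∧ ∃ m ∈ M', G.Adj ↑y m)) := Iff.rfl

/-- lift a set of non-monitors into the star graph's vertex type -/
def liftSet (M F : Set V) : Set (Option ↥(Mᶜ)) :=
  {z | ∃ x : ↥(Mᶜ), z = some x ∧ ↑x ∈ F}

lemma none_not_mem_liftSet {F : Set V} : none ∉ liftSet M F := by
  rintro ⟨x, hx, -⟩
  cases hx

lemma some_mem_liftSet_iff {F : Set V} {x : ↥(Mᶜ)} :
    some x ∈ liftSet M F ↔ ↑x ∈ F := by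
  constructor
  · rintro ⟨y, hy, hyF⟩
    cases Option.some_injective _ hy
    exact hyF
  · exact fun h => ⟨x, rfl, h⟩

lemma liftSet_ncard {F : Set V} (hF : F ⊆ Mᶜ) : (liftSet M F).ncard = F.ncard := by
  have h1 : liftSet M F = (fun x : ↥(Mᶜ) => some x) '' (Subtype.val ⁻¹' F) := by
    ext z
    constructor
    · rintro ⟨x, rfl, hxF⟩
      exact ⟨x, hxF, rfl⟩
    · rintro ⟨x, hxF, rfl⟩
      exact ⟨x, rfl, hxF⟩
  have h2 : F = Subtype.val '' (Subtype.val ⁻¹' F : Set ↥(Mᶜ)) := by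
    rw [Set.image_preimage_eq_iff.2]
    rwa [Subtype.range_coe_subtype]
  rw [h1, Set.ncard_image_of_injective _ (Option.some_injective _)]
  conv_rhs => rw [h2]
  rw [Set.ncard_image_of_injective _ Subtype.val_injective]

end Star

section StarWalks
variable {V : Type*} {G : SimpleGraph V} {M : Set V}

/-- From a `G`-walk from a non-monitor to a monitor, either hit the set `S`
(at a non-monitor) or produce an `S`-avoiding star-graph walk to `none`. -/
lemma walk_to_star {M' : Set V} (hM'M : M' ⊆ M) (S : Set (Option ↥(Mᶜ)))
    (hnone : none ∉ S) :
    ∀ {v t : V} (w : G.Walk v t), t ∈ M → (∀ y ∈ w.support, y ∈ M → y ∈ M') →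
    ∀ (hv : v ∈ Mᶜ),
    (∃ x ∈ w.support, ∃ hx : x ∈ Mᶜ, some (⟨x, hx⟩ : ↥(Mᶜ)) ∈ S) ∨
    (∃ ws : (StarGraph G Mᶜ M').Walk (some ⟨v, hv⟩) none, ∀ z ∈ ws.support, z ∉ S) := by
  intro v t w
  induction w with
  | nil =>
    intro ht _ hv
    exact absurd ht hv
  | @cons v y t h w' ih =>
    intro ht hMM' hv
    by_cases hvS : some (⟨v, hv⟩ : ↥(Mᶜ)) ∈ S
    · exact Or.inl ⟨v, Walk.start_mem_support _, hv, hvS⟩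
    by_cases hy : y ∈ M
    · have hy' : y ∈ M' := hMM' y (by simp) hy
      refine Or.inr ⟨Walk.cons (star_adj_some_none.2 ⟨y, hy', h⟩) Walk.nil, ?_⟩
      intro z hz
      simp only [Walk.support_cons, Walk.support_nil, List.mem_cons,
        List.not_mem_nil, or_false] at hz
      rcases hz with rfl | rfl
      · exact hvS
      · exact hnone
    · have hyc : y ∈ Mᶜ := hy
      rcases ih ht (fun x hx hxM => hMM' x (by
          rw [Walk.support_cons]; exact List.mem_cons_of_mem _ hx) hxM) hyc with hl | ⟨ws, hws⟩
      · obtain ⟨x, hxsup, hx, hxS⟩ := hl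
        exact Or.inl ⟨x, by rw [Walk.support_cons]; exact List.mem_cons_of_mem _ hxsup, hx, hxS⟩
      · have hadj : (StarGraph G Mᶜ M').Adj (some ⟨v, hv⟩) (some ⟨y, hyc⟩) :=
          star_adj_some_some.2 ⟨h.ne, Or.inl h⟩
        refine Or.inr ⟨Walk.cons hadj ws, ?_⟩
        intro z hz
        rw [Walk.support_cons, List.mem_cons] at hz
        rcases hz with rfl | hz
        · exact hvS
        · exact hws z hz

/-- Realize a star-graph path ending at `none` as a simple `G`-path from the
non-monitor to some monitor in `M'`, whose support consists of non-monitors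
appearing in the star path plus the final monitor. -/
lemma star_to_walk {M' : Set V} (hM'M : M' ⊆ M) :
    ∀ (z z' : Option ↥(Mᶜ)) (ws : (StarGraph G Mᶜ M').Walk z z'), ws.IsPath →
    ∀ (a : ↥(Mᶜ)), z = some a → z' = none →
    ∃ (m : V) (_ : m ∈ M') (p : G.Walk ↑a m), p.IsPath ∧
      (∀ x ∈ p.support, x = m ∨ ∃ hx : x ∈ Mᶜ, some (⟨x, hx⟩ : ↥(Mᶜ)) ∈ ws.support) := by
  intro z z' ws
  induction ws with
  | nil =>
    intro _ a hza hz'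
    subst hza
    exact absurd hz' (by simp)
  | @cons z y _ h ws' ih =>
    intro hpath a hza hz'
    subst hza
    subst hz'
    cases y with
    | none =>
      obtain ⟨m, hm, hadj⟩ := star_adj_some_none.1 h
      refine ⟨m, hm, Walk.cons hadj Walk.nil, ?_, ?_⟩
      · rw [Walk.cons_isPath_iff]
        refine ⟨Walk.IsPath.nil, ?_⟩
        intro hmem
        simp only [Walk.support_nil, List.mem_singleton] at hmem
        have : (↑a : V) ∈ M := hmem ▸ hM'M hm
        exact a.2 this
      · intro x hx
        simp only [Walk.support_cons, Walk.support_nil, List.mem_cons,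
          List.not_mem_nil, or_false] at hx
        rcases hx with rfl | rfl
        · exact Or.inr ⟨a.2, by simpa using Or.inl rfl⟩
        · exact Or.inl rfl
    | some b =>
      by_cases hmon : ∃ m ∈ M', G.Adj ↑a m
      · obtain ⟨m, hm, hadj⟩ := hmon
        refine ⟨m, hm, Walk.cons hadj Walk.nil, ?_, ?_⟩
        · rw [Walk.cons_isPath_iff]
          refine ⟨Walk.IsPath.nil, ?_⟩
          intro hmem
          simp only [Walk.support_nil, List.mem_singleton] at hmem
          have : (↑a : V) ∈ M := hmem ▸ hM'M hm
          exact a.2 this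
        · intro x hx
          simp only [Walk.support_cons, Walk.support_nil, List.mem_cons,
            List.not_mem_nil, or_false] at hx
          rcases hx with rfl | rfl
          · exact Or.inr ⟨a.2, by simpa using Or.inl rfl⟩
          · exact Or.inl rfl
      · have hGadj : G.Adj ↑a ↑b := by
          rcases (star_adj_some_some.1 h).2 with hg | ⟨hml, _⟩
          · exact hg
          · exact absurd hml hmon
        obtain ⟨m, hm, p', hp', hsupp⟩ := ih (hpath.of_cons) b rfl rfl
        refine ⟨m, hm, Walk.cons hGadj p', ?_, ?_⟩
        · rw [Walk.cons_isPath_iff]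
          refine ⟨hp', ?_⟩
          intro hmem
          rcases hsupp _ hmem with heq | ⟨hx, hxmem⟩
          · exact a.2 (heq ▸ hM'M hm)
          · have : (⟨↑a, hx⟩ : ↥(Mᶜ)) = a := Subtype.ext rfl
            rw [this] at hxmem
            rw [Walk.cons_isPath_iff] at hpath
            exact hpath.2 hxmem
        · intro x hx
          rw [Walk.support_cons, List.mem_cons] at hx
          rcases hx with rfl | hx
          · exact Or.inr ⟨a.2, by
              have : (⟨(↑a : V), a.2⟩ : ↥(Mᶜ)) = a := Subtype.ext rfl
              rw [this, Walk.support_cons]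
              exact List.mem_cons_self⟩
          · rcases hsupp x hx with heq | ⟨hx', hxmem⟩
            · exact Or.inl heq
            · exact Or.inr ⟨hx', by rw [Walk.support_cons]; exact List.mem_cons_of_mem _ hxmem⟩

end StarWalks

section NoneCut
variable {β : Type*} [Finite β] {H' : SimpleGraph (Option β)}

lemma walk_avoid_none
    (hclique : ∀ x y : β, H'.Adj none (some x) → H'.Adj none (some y) → x ≠ y →
      H'.Adj (some x) (some y))
    {a b : Option β} (ha : a ≠ none) (hb : b ≠ none) {T : Set (Option β)}
    (p : H'.Walk a b) (hp : p.IsPath) (hpT : ∀ z ∈ p.support, z ∉ T) :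
    ∃ q : H'.Walk a b, ∀ z ∈ q.support, z ∉ T ∧ z ≠ none := by
  classical
  by_cases hnp : none ∈ p.support
  swap
  · exact ⟨p, fun z hz => ⟨hpT z hz, fun h => hnp (h ▸ hz)⟩⟩
  have hdisj := List.disjoint_of_nodup_append (by
    rw [← Walk.support_append (p.takeUntil none hnp) (p.dropUntil none hnp), p.take_spec hnp]
    exact (Walk.isPath_def p).1 hp)
  cases hdrop : p.dropUntil none hnp with
  | nil => exact absurd rfl hb
  | @cons _ y _ h₂ d' =>
    have hdropsupp : (p.dropUntil none hnp).support = none :: d'.support := by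
      rw [hdrop, Walk.support_cons]
    have hd'nodup : none ∉ d'.support := by
      have := (Walk.isPath_def _).1 (hp.dropUntil hnp)
      rw [hdropsupp] at this
      exact (List.nodup_cons.1 this).1
    have hd'sub : ∀ z ∈ d'.support, z ∈ p.support := by
      intro z hz
      refine Walk.support_dropUntil_subset p hnp ?_
      rw [hdropsupp]
      exact List.mem_cons_of_mem _ hz
    cases htake : (p.takeUntil none hnp).reverse with
    | nil => exact absurd rfl ha
    | @cons _ x _ h₁ t' =>
      have htakesupp : ∀ z ∈ t'.support, z ∈ (p.takeUntil none hnp).support := by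
        intro z hz
        have : z ∈ (p.takeUntil none hnp).reverse.support := by
          rw [htake, Walk.support_cons]
          exact List.mem_cons_of_mem _ hz
        rwa [Walk.support_reverse, List.mem_reverse] at this
      have ht'nodup : none ∉ t'.support := by
        have := (Walk.isPath_def _).1 (hp.takeUntil hnp).reverse
        rw [htake, Walk.support_cons] at this
        exact (List.nodup_cons.1 this).1
      have ht'sub : ∀ z ∈ t'.support, z ∈ p.support := fun z hz =>
        Walk.support_takeUntil_subset p hnp (htakesupp z hz)
      -- x and y are both ≠ none
      have hxn : x ≠ none := fun hx => H'.loopless.irrefl none (hx ▸ h₁)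
      have hyn : y ≠ none := fun hy => H'.loopless.irrefl none (hy ▸ h₂)
      obtain ⟨x₀, rfl⟩ := Option.ne_none_iff_exists'.1 hxn
      obtain ⟨y₀, rfl⟩ := Option.ne_none_iff_exists'.1 hyn
      have hxy : x₀ ≠ y₀ := by
        intro heq
        subst heq
        exact hdisj (htakesupp _ t'.start_mem_support) (by
          rw [hdropsupp, List.tail_cons]
          exact d'.start_mem_support)
      have hadj : H'.Adj (some x₀) (some y₀) := hclique x₀ y₀ h₁ h₂ hxy
      refine ⟨t'.reverse.append (Walk.cons hadj d'), ?_⟩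
      intro z hz
      rw [Walk.support_append, Walk.support_cons, List.tail_cons] at hz
      rcases List.mem_append.1 hz with hz | hz
      · rw [Walk.support_reverse, List.mem_reverse] at hz
        exact ⟨hpT z (ht'sub z hz), fun h => ht'nodup (h ▸ hz)⟩
      · exact ⟨hpT z (hd'sub z hz), fun h => hd'nodup (h ▸ hz)⟩

lemma none_not_mem_cut
    (hclique : ∀ x y : β, H'.Adj none (some x) → H'.Adj none (some y) → x ≠ y →
      H'.Adj (some x) (some y))
    {c : ℕ} (hKC : KConnected H' c) {S : Set (Option β)} (hS : S.ncard ≤ c)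
    (hSne : Sᶜ.Nonempty) (hdisc : ¬ (H'.induce Sᶜ).Connected) : none ∉ S := by
  classical
  haveI : Fintype β := Fintype.ofFinite β
  intro hnS
  have hT : (S \ {none}).ncard < c := by
    have h1 : (S \ {none}).ncard < S.ncard :=
      Set.ncard_diff_singleton_lt_of_mem hnS (Set.toFinite _)
    omega
  have hTconn := hKC.2 _ hT
  refine hdisc (connected_of_walks hSne ?_)
  intro a ha b hb
  obtain ⟨w, hw⟩ := walk_avoiding_of_connected hTconn
    (fun h => ha (h.1)) (fun h => hb (h.1))
  have hbS : ∀ z ∈ w.bypass.support, z ∉ S \ {none} :=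
    fun z hz => hw z (Walk.support_bypass_subset w hz)
  obtain ⟨q, hq⟩ := walk_avoid_none hclique
    (fun (h : a = none) => ha (by rw [h]; exact hnS))
    (fun (h : b = none) => hb (by rw [h]; exact hnS))
    w.bypass (Walk.bypass_isPath w) hbS
  refine ⟨q, ?_⟩
  intro z hz
  intro hzS
  rcases (hq z hz) with ⟨hzT, hzn⟩
  exact hzT ⟨hzS, hzn⟩

end NoneCut

section StarFacts
variable {V : Type*} [Fintype V] {G : SimpleGraph V} {M : Set V}

lemma star_clique (M' : Set V) : ∀ x y : ↥(Mᶜ),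
    (StarGraph G Mᶜ M').Adj none (some x) → (StarGraph G Mᶜ M').Adj none (some y) →
    x ≠ y → (StarGraph G Mᶜ M').Adj (some x) (some y) := by
  intro x y hx hy hxy
  exact star_adj_some_some.2 ⟨fun h => hxy (Subtype.ext h),
    Or.inr ⟨star_adj_none_some.1 hx, star_adj_none_some.1 hy⟩⟩

lemma card_star_vertices (M' : Set V) :
    Nat.card (Option ↥(Mᶜ)) = Mᶜ.ncard + 1 := by
  haveI : Fintype ↥(Mᶜ) := (Mᶜ).toFinite.fintype
  rw [Nat.card_eq_fintype_card, Fintype.card_option, ← Nat.card_coe_set_eq,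
    Nat.card_eq_fintype_card]

lemma star_vc_zero (M' : Set V) (hσ : Mᶜ.ncard = 0) :
    vertexConnectivity (StarGraph G Mᶜ M') = 0 := by
  have hb : ∀ k ∈ {k | KConnected (StarGraph G Mᶜ M') k}, k ≤ 0 := by
    intro k hk
    have := hk.1
    rw [card_star_vertices M', hσ] at this
    omega
  rcases Set.eq_empty_or_nonempty {k | KConnected (StarGraph G Mᶜ M') k} with he | hne
  · simp only [vertexConnectivity, he, csSup_empty]
    rfl
  · exact le_antisymm (csSup_le hne hb) (Nat.zero_le _)

lemma star_reach_none (hG : G.Connected) (hM : M.Nonempty) (a : Option ↥(Mᶜ)) :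
    ∃ w : (StarGraph G Mᶜ M).Walk a none, True := by
  cases a with
  | none => exact ⟨Walk.nil, trivial⟩
  | some x =>
    obtain ⟨m₀, hm₀⟩ := hM
    obtain ⟨wg⟩ := hG.preconnected ↑x m₀
    rcases walk_to_star (le_refl M) ∅ (by simp) wg hm₀ (fun y _ hy => hy) x.2 with hl | ⟨ws, _⟩
    · obtain ⟨_, _, _, hmem⟩ := hl
      exact absurd hmem (by simp)
    · have : (⟨↑x, x.2⟩ : ↥(Mᶜ)) = x := Subtype.ext rfl
      rw [this] at ws
      exact ⟨ws, trivial⟩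

lemma star_vc_pos (hG : G.Connected) (hM : M.Nonempty) (hσ : 1 ≤ Mᶜ.ncard) :
    1 ≤ vertexConnectivity (StarGraph G Mᶜ M) := by
  haveI : Finite (Option ↥(Mᶜ)) := by
    haveI : Fintype ↥(Mᶜ) := (Mᶜ).toFinite.fintype
    infer_instance
  refine le_csSup (kconn_bddAbove _) ?_
  constructor
  · rw [card_star_vertices M]
    omega
  · intro S hS
    have hS0 : S = ∅ := by
      have : S.ncard = 0 := by omega
      exact (Set.ncard_eq_zero (Set.toFinite _)).1 this
    subst hS0
    refine connected_of_walks ⟨none, by simp⟩ ?_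
    intro a _ b _
    obtain ⟨wa, -⟩ := star_reach_none hG hM a
    obtain ⟨wb, -⟩ := star_reach_none hG hM b
    exact ⟨wa.append wb.reverse, by simp⟩

end StarFacts

section IdentFacts
variable {V : Type*} [Fintype V] {G : SimpleGraph V}

lemma ident_zero (P : Set (MWalk G)) (Nm : Set V) : Identifiable P Nm 0 := by
  intro F F' _ _ hF hF' hne
  exact absurd (((Set.ncard_eq_zero (Set.toFinite _)).1 (Nat.le_zero.1 hF)).trans
    ((Set.ncard_eq_zero (Set.toFinite _)).1 (Nat.le_zero.1 hF')).symm) hne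

lemma ident_mono {P : Set (MWalk G)} {Nm : Set V} {j k : ℕ}
    (h : Identifiable P Nm k) (hjk : j ≤ k) : Identifiable P Nm j :=
  fun F F' hF hF' hFk hF'k hne =>
    h F F' hF hF' (le_trans hFk hjk) (le_trans hF'k hjk) hne

lemma le_maxIdent {P : Set (MWalk G)} {Nm : Set V} {k : ℕ}
    (h1 : k ≤ Nm.ncard) (h2 : Identifiable P Nm k) : k ≤ maxIdent P Nm :=
  le_csSup ⟨Nm.ncard, fun _ hj => hj.1⟩ ⟨h1, h2⟩

lemma maxIdent_le {P : Set (MWalk G)} {Nm : Set V} {U : ℕ}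
    (hU : ∀ k, k ≤ Nm.ncard → Identifiable P Nm k → k ≤ U) : maxIdent P Nm ≤ U :=
  csSup_le ⟨0, Nat.zero_le _, ident_zero P Nm⟩ (fun k hk => hU k hk.1 hk.2)

end IdentFacts

section CutSetup
variable {V : Type*} [Fintype V] {G : SimpleGraph V} {M : Set V}

lemma exists_unreachable {M' : Set V} {S : Set (Option ↥(Mᶜ))}
    (hdisc : ¬ ((StarGraph G Mᶜ M').induce Sᶜ).Connected) (hnone : none ∉ S) :
    ∃ u : ↥(Mᶜ), some u ∉ S ∧
      ¬ ∃ w : (StarGraph G Mᶜ M').Walk (some u) none, ∀ z ∈ w.support, z ∉ S := by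
  have hz : ∃ z : ↥(Sᶜ), ¬ ((StarGraph G Mᶜ M').induce Sᶜ).Reachable ⟨none, hnone⟩ z := by
    by_contra hall
    push_neg at hall
    haveI : Nonempty ↥(Sᶜ) := ⟨⟨none, hnone⟩⟩
    exact hdisc ⟨fun x y => (hall x).symm.trans (hall y)⟩
  obtain ⟨⟨z, hzS⟩, hznr⟩ := hz
  cases z with
  | none => exact absurd (Reachable.refl _) hznr
  | some u =>
    refine ⟨u, hzS, ?_⟩
    rintro ⟨w, hw⟩
    have := reachable_induce_of_walk (A := Sᶜ) w hw
    exact hznr this.symm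

lemma cut_setup {M' : Set V}
    (hcard : vertexConnectivity (StarGraph G Mᶜ M') + 1 < Nat.card (Option ↥(Mᶜ))) :
    ∃ (S₀ : Set V) (u : ↥(Mᶜ)), S₀ ⊆ Mᶜ ∧
      S₀.ncard = vertexConnectivity (StarGraph G Mᶜ M') ∧ ↑u ∉ S₀ ∧
      ¬ ∃ w : (StarGraph G Mᶜ M').Walk (some u) none,
        ∀ z ∈ w.support, z ∉ liftSet M S₀ := by
  haveI : Finite (Option ↥(Mᶜ)) := by
    haveI : Fintype ↥(Mᶜ) := (Mᶜ).toFinite.fintype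
    infer_instance
  set H' := StarGraph G Mᶜ M' with hH'
  obtain ⟨S, hSle, hSdisc⟩ := exists_cut H' (by omega)
  have hSge : vertexConnectivity H' ≤ S.ncard := cut_ncard_ge H' hSdisc
  have hScne : Sᶜ.Nonempty := by
    rw [Set.nonempty_compl]
    intro huniv
    have := Set.ncard_univ (Option ↥(Mᶜ))
    rw [← huniv] at this
    omega
  have hpos : 0 < Nat.card (Option ↥(Mᶜ)) := by omega
  have hnS : none ∉ S :=
    none_not_mem_cut (star_clique M') (kconn_vc H' hpos) hSle hScne hSdisc
  set S₀ : Set V := {x : V | ∃ hx : x ∈ Mᶜ, some (⟨x, hx⟩ : ↥(Mᶜ)) ∈ S} with hS₀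
  have hSlift : liftSet M S₀ = S := by
    ext z
    cases z with
    | none => simp [none_not_mem_liftSet, hnS]
    | some x =>
      rw [some_mem_liftSet_iff]
      constructor
      · rintro ⟨hx, hmem⟩
        rwa [show (⟨↑x, hx⟩ : ↥(Mᶜ)) = x from Subtype.ext rfl] at hmem
      · intro hmem
        exact ⟨x.2, by rwa [show (⟨↑x, x.2⟩ : ↥(Mᶜ)) = x from Subtype.ext rfl]⟩
  have hS₀sub : S₀ ⊆ Mᶜ := fun x hx => hx.1
  have hS₀card : S₀.ncard = vertexConnectivity H' := by
    have := liftSet_ncard (M := M) hS₀sub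
    rw [hSlift] at this
    omega
  obtain ⟨u, huS, hunr⟩ := exists_unreachable hSdisc hnS
  refine ⟨S₀, u, hS₀sub, hS₀card, ?_, ?_⟩
  · intro hmem
    obtain ⟨hx, hmem'⟩ := hmem
    rw [show (⟨↑u, hx⟩ : ↥(Mᶜ)) = u from Subtype.ext rfl] at hmem'
    exact huS hmem'
  · rw [hSlift]
    exact hunr

lemma side_hit {M' : Set V} (hM'M : M' ⊆ M) {S₀ : Set V} {u t : V} (hu : u ∈ Mᶜ)
    (w : G.Walk u t) (ht : t ∈ M) (hMM' : ∀ y ∈ w.support, y ∈ M → y ∈ M')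
    (hnowalk : ¬ ∃ ws : (StarGraph G Mᶜ M').Walk (some ⟨u, hu⟩) none,
      ∀ z ∈ ws.support, z ∉ liftSet M S₀) :
    ∃ x ∈ w.support, x ∈ S₀ ∧ x ∈ Mᶜ := by
  rcases walk_to_star hM'M (liftSet M S₀) none_not_mem_liftSet w ht hMM' hu with
    ⟨x, hxs, hx, hxS⟩ | ⟨ws, hws⟩
  · exact ⟨x, hxs, some_mem_liftSet_iff.1 hxS, hx⟩
  · exact absurd ⟨ws, hws⟩ hnowalk

end CutSetup

section Upper
variable {V : Type*} [Fintype V] {G : SimpleGraph V} {M : Set V}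

lemma csp_sides {p : MWalk G} (hp : p ∈ CSP G M) {u : V} (hu : Traverses p u) :
    ∃ (m1 m2 : V) (w1 : G.Walk u m1) (w2 : G.Walk u m2), m1 ∈ M ∧ m2 ∈ M ∧ m1 ≠ m2 ∧
      (∀ y, y ∈ w1.support → y ∈ w2.support → y = u) ∧
      (∀ y ∈ w1.support, Traverses p y) ∧ (∀ y ∈ w2.support, Traverses p y) := by
  classical
  obtain ⟨hm1, hm2, hne, hpath⟩ := hp
  have hu' : u ∈ p.2.2.support := hu
  refine ⟨p.1, p.2.1, (p.2.2.takeUntil u hu').reverse, p.2.2.dropUntil u hu',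
    hm1, hm2, hne, ?_, ?_, ?_⟩
  · intro y hy1 hy2
    rw [Walk.support_reverse, List.mem_reverse] at hy1
    exact eq_of_mem_takeUntil_mem_dropUntil hpath hu' hy1 hy2
  · intro y hy
    rw [Walk.support_reverse, List.mem_reverse] at hy
    exact Walk.support_takeUntil_subset _ _ hy
  · intro y hy
    exact Walk.support_dropUntil_subset _ _ hy

lemma subtype_eta_walk {M' : Set V} (u : ↥(Mᶜ))
    (h : ¬ ∃ w : (StarGraph G Mᶜ M').Walk (some u) none,
      ∀ z ∈ w.support, z ∉ liftSet M (S₀ : Set V)) :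
    ¬ ∃ w : (StarGraph G Mᶜ M').Walk (some ⟨↑u, u.2⟩) none,
      ∀ z ∈ w.support, z ∉ liftSet M S₀ := by
  rwa [show (⟨(↑u : V), u.2⟩ : ↥(Mᶜ)) = u from Subtype.ext rfl]

lemma upper_A (hσ : vertexConnectivity (StarGraph G Mᶜ M) + 1 ≤ Mᶜ.ncard)
    (hvc1 : 1 ≤ vertexConnectivity (StarGraph G Mᶜ M)) :
    ¬ Identifiable (CSP G M) Mᶜ (vertexConnectivity (StarGraph G Mᶜ M)) := by
  intro hId
  set δs := vertexConnectivity (StarGraph G Mᶜ M) with hδs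
  obtain ⟨S₀, u, hsub, hcardS, huS, hnowalk⟩ := cut_setup (G := G) (M := M) (M' := M) (by
    rw [card_star_vertices M]; omega)
  have hS₀ne : S₀.Nonempty := Set.nonempty_of_ncard_ne_zero (by omega)
  obtain ⟨s, hs⟩ := hS₀ne
  set F' : Set V := S₀ \ {s} with hF'
  set F : Set V := insert ↑u (S₀ \ {s}) with hF
  have hF'sub : F' ⊆ Mᶜ := fun x hx => hsub hx.1
  have hFsub : F ⊆ Mᶜ := by
    intro x hx
    rcases Set.mem_insert_iff.1 hx with rfl | hx
    · exact u.2
    · exact hsub hx.1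
  have hF'card : F'.ncard ≤ δs := by
    rw [hF']
    have := Set.ncard_diff_singleton_of_mem hs
    omega
  have hFcard : F.ncard ≤ δs := by
    rw [hF]
    have h1 := Set.ncard_insert_le (↑u : V) (S₀ \ {s})
    have := Set.ncard_diff_singleton_of_mem hs
    omega
  have hFne : F ≠ F' := by
    intro h
    have : (↑u : V) ∈ F' := h ▸ Set.mem_insert _ _
    exact huS this.1
  rcases hId F F' hFsub hF'sub hFcard hF'card hFne with
    ⟨p, hpCSP, ⟨x, hxF, hxtrav⟩, havoid⟩ | ⟨p, hpCSP, ⟨x, hxF', hxtrav⟩, havoid⟩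
  · rcases Set.mem_insert_iff.1 hxF with rfl | hxF'
    · -- p traverses u; both sides hit S₀, at distinct vertices
      obtain ⟨m1, m2, w1, w2, hm1, hm2, hmne, hjunc, hw1p, hw2p⟩ := csp_sides hpCSP hxtrav
      obtain ⟨x1, hx1w, hx1S, hx1c⟩ := side_hit subset_rfl u.2 w1 hm1
        (fun y _ hy => hy) (subtype_eta_walk u hnowalk)
      obtain ⟨x2, hx2w, hx2S, hx2c⟩ := side_hit subset_rfl u.2 w2 hm2
        (fun y _ hy => hy) (subtype_eta_walk u hnowalk)
      have hx12 : x1 ≠ x2 := by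
        intro h
        subst h
        exact huS (hjunc x1 hx1w hx2w ▸ hx1S)
      by_cases hx1s : x1 = s
      · exact havoid x2 ⟨hx2S, by
          intro h; exact hx12 (hx1s.trans (Set.mem_singleton_iff.1 h).symm)⟩ (hw2p x2 hx2w)
      · exact havoid x1 ⟨hx1S, hx1s⟩ (hw1p x1 hx1w)
    · exact havoid x hxF' hxtrav
  · exact havoid x (Set.mem_insert_of_mem _ hxF') hxtrav

lemma upper_B {ms : V} (hms : ms ∈ M)
    (hσ : vertexConnectivity (StarGraph G Mᶜ (M \ {ms})) + 1 ≤ Mᶜ.ncard) :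
    ¬ Identifiable (CSP G M) Mᶜ (vertexConnectivity (StarGraph G Mᶜ (M \ {ms})) + 1) := by
  intro hId
  set δm := vertexConnectivity (StarGraph G Mᶜ (M \ {ms})) with hδm
  obtain ⟨S₀, u, hsub, hcardS, huS, hnowalk⟩ := cut_setup (G := G) (M := M) (M' := M \ {ms}) (by
    rw [card_star_vertices (M \ {ms})]; omega)
  set F : Set V := insert ↑u S₀ with hF
  have hFsub : F ⊆ Mᶜ := by
    intro x hx
    rcases Set.mem_insert_iff.1 hx with rfl | hx
    · exact u.2
    · exact hsub hx
  have hFcard : F.ncard ≤ δm + 1 := by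
    rw [hF]
    have h1 := Set.ncard_insert_le (↑u : V) S₀
    omega
  have hFne : F ≠ S₀ := by
    intro h
    exact huS (h ▸ Set.mem_insert _ _)
  rcases hId F S₀ hFsub hsub hFcard (by omega) hFne with
    ⟨p, hpCSP, ⟨x, hxF, hxtrav⟩, havoid⟩ | ⟨p, hpCSP, ⟨x, hxF', hxtrav⟩, havoid⟩
  · rcases Set.mem_insert_iff.1 hxF with rfl | hxF'
    · obtain ⟨m1, m2, w1, w2, hm1, hm2, hmne, hjunc, hw1p, hw2p⟩ := csp_sides hpCSP hxtrav
      by_cases hmsw : ms ∈ w1.support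
      · have hmsw2 : ms ∉ w2.support := by
          intro h2
          have := hjunc ms hmsw h2
          exact absurd hms (this ▸ u.2)
        obtain ⟨x2, hx2w, hx2S, hx2c⟩ := side_hit Set.diff_subset u.2 w2 hm2
          (fun y hy hyM => ⟨hyM, by
            intro hexact
            rw [Set.mem_singleton_iff] at hexact
            subst hexact
            exact hmsw2 hy⟩)
          (subtype_eta_walk u hnowalk)
        exact havoid x2 hx2S (hw2p x2 hx2w)
      · obtain ⟨x1, hx1w, hx1S, hx1c⟩ := side_hit Set.diff_subset u.2 w1 hm1
          (fun y hy hyM => ⟨hyM, by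
            intro hexact
            rw [Set.mem_singleton_iff] at hexact
            subst hexact
            exact hmsw hy⟩)
          (subtype_eta_walk u hnowalk)
        exact havoid x1 hx1S (hw1p x1 hx1w)
    · exact havoid x hxF' hxtrav
  · exact havoid x (Set.mem_insert_of_mem _ hxF') hxtrav

end Upper

section Lower
variable {V : Type*} [Fintype V] {G : SimpleGraph V} {M : Set V}

lemma glue_paths {m mR u x : V} (p q : G.Walk u m) (hp : p.IsPath) (hq : q.IsPath)
    (hpq : ∀ y, y ∈ p.support → y ∈ q.support → y = u ∨ y = m)
    (ρ : G.Walk mR x) (hρ : ρ.IsPath) (hxp : x ∈ p.support)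
    (hfirst : ∀ y ∈ ρ.support, (y ∈ p.support ∨ y ∈ q.support) → y = x)
    (hmρ : m ∉ ρ.support) :
    ∃ final : G.Walk m mR, final.IsPath ∧ u ∈ final.support ∧
      ∀ y ∈ final.support, y ∈ p.support ∨ y ∈ q.support ∨ y ∈ ρ.support := by
  classical
  have hxm : x ≠ m := fun h => hmρ (h ▸ ρ.end_mem_support)
  have hApath : (q.reverse.append (p.takeUntil x hxp)).IsPath := by
    refine isPath_append hq.reverse (hp.takeUntil hxp) ?_
    intro y hy hy'
    rw [Walk.support_reverse, List.mem_reverse] at hy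
    rcases hpq y (Walk.support_takeUntil_subset _ _ hy') hy with h | h
    · exact h
    · exact absurd (endpoint_mem_takeUntil hp hxp (h ▸ hy')) (h ▸ hxm.symm)
  have hAsub : ∀ y ∈ (q.reverse.append (p.takeUntil x hxp)).support,
      y ∈ q.support ∨ y ∈ p.support := by
    intro y hy
    rw [Walk.support_append] at hy
    rcases List.mem_append.1 hy with hy | hy
    · rw [Walk.support_reverse, List.mem_reverse] at hy
      exact Or.inl hy
    · exact Or.inr (Walk.support_takeUntil_subset _ _ (List.mem_of_mem_tail hy))
  refine ⟨(q.reverse.append (p.takeUntil x hxp)).append ρ.reverse, ?_, ?_, ?_⟩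
  · refine isPath_append hApath hρ.reverse ?_
    intro y hy hy'
    rw [Walk.support_reverse, List.mem_reverse] at hy'
    rcases hAsub y hy with h | h
    · exact hfirst y hy' (Or.inr h)
    · exact hfirst y hy' (Or.inl h)
  · rw [Walk.support_append]
    refine List.mem_append_left _ ?_
    rw [Walk.support_append]
    exact List.mem_append_left _ (by
      rw [Walk.support_reverse, List.mem_reverse]
      exact q.start_mem_support)
  · intro y hy
    rw [Walk.support_append] at hy
    rcases List.mem_append.1 hy with hy | hy
    · rcases hAsub y hy with h | h
      · exact Or.inr (Or.inl h)
      · exact Or.inl h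
    · right; right
      have := List.mem_of_mem_tail hy
      rwa [Walk.support_reverse, List.mem_reverse] at this

lemma exists_path (k : ℕ)
    (hk2 : k + 2 ≤ vertexConnectivity (StarGraph G Mᶜ M))
    (hkM : ∀ m ∈ M, k + 1 ≤ vertexConnectivity (StarGraph G Mᶜ (M \ {m})))
    {F' : Set V} (hF'sub : F' ⊆ Mᶜ) (hF'card : F'.ncard ≤ k)
    {u : V} (hu : u ∈ Mᶜ) (huF : u ∉ F') :
    ∃ pw ∈ CSP G M, Traverses pw u ∧ ∀ x ∈ F', ¬ Traverses pw x := by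
  classical
  haveI : Finite (Option ↥(Mᶜ)) := by
    haveI : Fintype ↥(Mᶜ) := (Mᶜ).toFinite.fintype
    infer_instance
  set Gs := StarGraph G Mᶜ M with hGs
  have hpos : 0 < Nat.card (Option ↥(Mᶜ)) := by
    rw [card_star_vertices M]; omega
  have hKCs : KConnected Gs (vertexConnectivity Gs) := kconn_vc Gs hpos
  set Sl : Set (Option ↥(Mᶜ)) := liftSet M F' with hSl
  have hSlcard : Sl.ncard ≤ k := by rw [hSl, liftSet_ncard hF'sub]; exact hF'card
  have huSl : some (⟨u, hu⟩ : ↥(Mᶜ)) ∉ Sl := fun h => huF (some_mem_liftSet_iff.1 h)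
  -- hypothesis for the two-paths lemma
  have HC : ∀ x a b : Option ↥(Mᶜ), a ∉ Sl → a ≠ x → b ∉ Sl → b ≠ x →
      ∃ w : Gs.Walk a b, ∀ y ∈ w.support, y ∉ Sl ∧ y ≠ x := by
    intro x a b haS hax hbS hbx
    have hT : (insert x Sl).ncard < vertexConnectivity Gs := by
      have := Set.ncard_insert_le x Sl
      omega
    have hconn := hKCs.2 _ hT
    obtain ⟨w, hw⟩ := walk_avoiding_of_connected (a := a) (b := b) hconn
      (by simp only [Set.mem_insert_iff]; tauto) (by simp only [Set.mem_insert_iff]; tauto)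
    refine ⟨w, fun y hy => ?_⟩
    have := hw y hy
    simp only [Set.mem_insert_iff] at this
    tauto
  -- initial avoiding walk from u to the virtual monitor
  obtain ⟨w0, hw0⟩ := walk_avoiding_of_connected
    (hKCs.2 Sl (by omega)) huSl (none_not_mem_liftSet)
  obtain ⟨P, Q, hPpath, hQpath, hPS, hQS, hPQ⟩ := two_paths HC w0.length
    (some ⟨u, hu⟩) none huSl none_not_mem_liftSet (by simp) ⟨w0, hw0, le_refl _⟩
  obtain ⟨mP, hmP, p, hppath, hpsupp⟩ :=
    star_to_walk subset_rfl _ _ P hPpath ⟨u, hu⟩ rfl rfl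
  obtain ⟨mQ, hmQ, q, hqpath, hqsupp⟩ :=
    star_to_walk subset_rfl _ _ Q hQpath ⟨u, hu⟩ rfl rfl
  have havoidp : ∀ x ∈ p.support, x ∉ F' := by
    intro x hx hxF
    rcases hpsupp x hx with rfl | ⟨hxc, hmem⟩
    · exact (hF'sub hxF) hmP
    · exact hPS _ hmem (some_mem_liftSet_iff.2 hxF)
  have havoidq : ∀ x ∈ q.support, x ∉ F' := by
    intro x hx hxF
    rcases hqsupp x hx with rfl | ⟨hxc, hmem⟩
    · exact (hF'sub hxF) hmQ
    · exact hQS _ hmem (some_mem_liftSet_iff.2 hxF)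
  -- shared non-monitors of p and q can only be u (or the common monitor)
  have hshare : ∀ y, y ∈ p.support → y ∈ q.support → y = u ∨ (y = mP ∧ y = mQ) := by
    intro y hyp hyq
    rcases hpsupp y hyp with rfl | ⟨hyc, hymem⟩
    · rcases hqsupp y hyq with heq | ⟨hyc', _⟩
      · exact Or.inr ⟨rfl, heq⟩
      · exact absurd hmP hyc'
    · rcases hqsupp y hyq with rfl | ⟨hyc', hymem'⟩
      · exact absurd hmQ hyc
      · have : (⟨y, hyc'⟩ : ↥(Mᶜ)) = ⟨y, hyc⟩ := rfl
        rw [this] at hymem'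
        rcases hPQ _ hymem hymem' with h | h
        · left
          exact congrArg Subtype.val (Option.some_injective _ h)
        · exact absurd h (by simp)
  by_cases hmPQ : mP = mQ
  · -- both realized paths end at the same monitor mP; reroute via G_m
    subst hmPQ
    have hmM : mP ∈ M := hmP
    set Gm := StarGraph G Mᶜ (M \ {mP}) with hGm
    have hKCm : KConnected Gm (k + 1) :=
      kconn_mono Gm (kconn_vc Gm (by rw [card_star_vertices (M \ {mP})]; omega)) (hkM mP hmM)
    obtain ⟨wr0, hwr0⟩ := walk_avoiding_of_connected
      (hKCm.2 Sl (by omega)) huSl (none_not_mem_liftSet)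
    obtain ⟨mR, hmRmem, r, hrpath, hrsupp⟩ :=
      star_to_walk Set.diff_subset _ _ wr0.bypass (Walk.bypass_isPath wr0) ⟨u, hu⟩ rfl rfl
    have hmRM : mR ∈ M := hmRmem.1
    have hmRm : mR ≠ mP := by
      intro h
      exact hmRmem.2 (Set.mem_singleton_iff.2 h)
    have havoidr : ∀ x ∈ r.support, x ∉ F' := by
      intro x hx hxF
      rcases hrsupp x hx with rfl | ⟨hxc, hmem⟩
      · exact (hF'sub hxF) hmRM
      · exact hwr0 _ (Walk.support_bypass_subset _ hmem) (some_mem_liftSet_iff.2 hxF)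
    have hmr : mP ∉ r.support := by
      intro hmem
      rcases hrsupp mP hmem with heq | ⟨hc, _⟩
      · exact hmRm heq.symm
      · exact hc hmM
    obtain ⟨x, hxT, ρ, hfirst, hsubρ, hρpath'⟩ :=
      exists_firstHit r.reverse {z | z ∈ p.support ∨ z ∈ q.support}
        (Or.inl p.start_mem_support)
    have hρpath : ρ.IsPath := hρpath' hrpath.reverse
    have hsubρ' : ∀ y ∈ ρ.support, y ∈ r.support := by
      intro y hy
      have := hsubρ y hy
      rwa [Walk.support_reverse, List.mem_reverse] at this
    have hmρ : mP ∉ ρ.support := fun h => hmr (hsubρ' mP h)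
    have hpq' : ∀ y, y ∈ p.support → y ∈ q.support → y = u ∨ y = mP := by
      intro y h1 h2
      rcases hshare y h1 h2 with h | h
      · exact Or.inl h
      · exact Or.inr h.1
    rcases hxT with hxp | hxq
    · obtain ⟨final, hfinpath, hufin, hfinsub⟩ :=
        glue_paths p q hppath hqpath hpq' ρ hρpath hxp hfirst hmρ
      refine ⟨⟨mP, mR, final⟩, ⟨hmM, hmRM, hmRm.symm, hfinpath⟩, hufin, ?_⟩
      intro z hz htrav
      rcases hfinsub z htrav with h | h | h
      · exact havoidp z h hz
      · exact havoidq z h hz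
      · exact havoidr z (hsubρ' z h) hz
    · obtain ⟨final, hfinpath, hufin, hfinsub⟩ :=
        glue_paths q p hqpath hppath (fun y h1 h2 => hpq' y h2 h1) ρ hρpath hxq
          (fun y hy hor => hfirst y hy hor.symm) hmρ
      refine ⟨⟨mP, mR, final⟩, ⟨hmM, hmRM, hmRm.symm, hfinpath⟩, hufin, ?_⟩
      intro z hz htrav
      rcases hfinsub z htrav with h | h | h
      · exact havoidq z h hz
      · exact havoidp z h hz
      · exact havoidr z (hsubρ' z h) hz
  · -- distinct monitors: just concatenate
    have hjunc : ∀ y ∈ q.reverse.support, y ∈ p.support → y = u := by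
      intro y hy hyp
      rw [Walk.support_reverse, List.mem_reverse] at hy
      rcases hshare y hyp hy with h | h
      · exact h
      · exact absurd (h.1.symm.trans h.2) hmPQ
    have hfinpath : (q.reverse.append p).IsPath :=
      isPath_append hqpath.reverse hppath hjunc
    refine ⟨⟨mQ, mP, q.reverse.append p⟩, ⟨hmQ, hmP, fun h => hmPQ h.symm, hfinpath⟩, ?_, ?_⟩
    · show u ∈ (q.reverse.append p).support
      rw [Walk.support_append]
      refine List.mem_append_left _ ?_
      rw [Walk.support_reverse, List.mem_reverse]
      exact q.start_mem_support
    · intro z hz htrav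
      have : z ∈ (q.reverse.append p).support := htrav
      rw [Walk.support_append] at this
      rcases List.mem_append.1 this with h | h
      · rw [Walk.support_reverse, List.mem_reverse] at h
        exact havoidq z h hz
      · exact havoidp z (List.mem_of_mem_tail h) hz

end Lower

/-- Maximum identifiability under CSP: with `δ_M = min_{m ∈ M} δ(G_m)`, if
`min(δ_M, δ(G*) − 1) ≤ σ − 2` then
`min(δ_M − 1, δ(G*) − 2) ≤ Ω_CSP(G) ≤ min(δ_M, δ(G*) − 1)`. -/
theorem stmt_18 {V : Type*} [Fintype V] (G : SimpleGraph V) (hG : G.Connected)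
    (M : Set V) (hM : M.Nonempty) (δM : ℕ)
    (hδM : δM = sInf { d : ℕ | ∃ m ∈ M,
      d = vertexConnectivity (StarGraph G Mᶜ (M \ {m})) })
    (h : min (δM : ℤ) ((vertexConnectivity (StarGraph G Mᶜ M) : ℤ) - 1) ≤
      (Mᶜ.ncard : ℤ) - 2) :
    min ((δM : ℤ) - 1) ((vertexConnectivity (StarGraph G Mᶜ M) : ℤ) - 2) ≤
        (maxIdent (CSP G M) Mᶜ : ℤ) ∧
      (maxIdent (CSP G M) Mᶜ : ℤ) ≤
        min (δM : ℤ) ((vertexConnectivity (StarGraph G Mᶜ M) : ℤ) - 1) := by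
  classical
  -- abbreviations
  have hσ1 : 1 ≤ Mᶜ.ncard := by
    by_contra h0
    push_neg at h0
    have hs0 : Mᶜ.ncard = 0 := by omega
    have hz := star_vc_zero (G := G) M hs0
    rw [hz] at h
    rw [hs0] at h
    omega
  have hδs1 : 1 ≤ vertexConnectivity (StarGraph G Mᶜ M) := star_vc_pos hG hM hσ1
  set δs := vertexConnectivity (StarGraph G Mᶜ M) with hδs
  have hδMle : ∀ m ∈ M, δM ≤ vertexConnectivity (StarGraph G Mᶜ (M \ {m})) := by
    intro m hm
    rw [hδM]
    exact Nat.sInf_le ⟨m, hm, rfl⟩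
  obtain ⟨ms, hms, hmseq⟩ :
      ∃ m ∈ M, δM = vertexConnectivity (StarGraph G Mᶜ (M \ {m})) := by
    obtain ⟨m₀, hm₀⟩ := hM
    have hne : { d : ℕ | ∃ m ∈ M,
        d = vertexConnectivity (StarGraph G Mᶜ (M \ {m})) }.Nonempty :=
      ⟨_, m₀, hm₀, rfl⟩
    have := Nat.sInf_mem hne
    rw [← hδM] at this
    exact this
  set U := min δM (δs - 1) with hU
  have hUσ : U + 2 ≤ Mᶜ.ncard := by omega
  -- upper bound
  have hup : maxIdent (CSP G M) Mᶜ ≤ U := by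
    refine maxIdent_le ?_
    intro k hk hIdent
    by_contra hkU
    push_neg at hkU
    rcases le_or_gt δM (δs - 1) with hcase | hcase
    · have hid : Identifiable (CSP G M) Mᶜ (δM + 1) := ident_mono hIdent (by omega)
      have hB := upper_B (G := G) hms (by rw [← hmseq]; omega)
      rw [← hmseq] at hB
      exact hB hid
    · have hid : Identifiable (CSP G M) Mᶜ δs := ident_mono hIdent (by omega)
      exact upper_A (by omega) hδs1 hid
  -- lower bound
  have hlow : U - 1 ≤ maxIdent (CSP G M) Mᶜ := by
    rcases Nat.eq_zero_or_pos U with hU0 | hU1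
    · rw [hU0]
      exact Nat.zero_le _
    have hkn : Identifiable (CSP G M) Mᶜ (U - 1) := by
      intro F F' hF hF' hFc hF'c hne
      by_cases hFF : (F \ F').Nonempty
      · obtain ⟨u, huF, huF'⟩ := hFF
        obtain ⟨pw, hpw, htrav, havoid⟩ := exists_path (U - 1) (by omega)
          (fun m hm => le_trans (by omega) (hδMle m hm)) hF' hF'c (hF huF) huF'
        exact Or.inl ⟨pw, hpw, ⟨u, huF, htrav⟩, havoid⟩
      · rw [Set.not_nonempty_iff_eq_empty, Set.diff_eq_empty] at hFF
        have hssub : F ⊂ F' := ⟨hFF, fun h => hne (Set.Subset.antisymm hFF h)⟩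
        obtain ⟨u, huF', huF⟩ := Set.exists_of_ssubset hssub
        obtain ⟨pw, hpw, htrav, havoid⟩ := exists_path (U - 1) (by omega)
          (fun m hm => le_trans (by omega) (hδMle m hm)) hF hFc (hF' huF') huF
        exact Or.inr ⟨pw, hpw, ⟨u, huF', htrav⟩, havoid⟩
    exact le_maxIdent (by omega) hkn
  constructor
  · omega
  · omega
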